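/- If f : I → ℝ is convex and x, y ∈ I with x < y, then (2/(y-x)) ∫ₓʸ f(t) dt ≤ f((x+y)/2) + (f(x)+f(y))/2. -/

import Mathlib

open MeasureTheory intervalIntegral Set

/-- Pointwise chord bound for convex functions. -/
lemma convex_chord_bound {I : Set ℝ} {f : ℝ → ℝ} (hf : ConvexOn ℝ I f)
    {a b : ℝ} (ha : a ∈ I) (hb : b ∈ I) (hab : a < b) {t : ℝ} (ht : t ∈ Set.Icc a b) :
    f t ≤ ((b - t) * f a + (t - a) * f b) / (b - a) := by
  have hba : (0:ℝ) < b - a := by linarith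
  have h1 : (0:ℝ) ≤ (b - t) / (b - a) := by
    apply div_nonneg <;> [linarith [ht.2]; linarith]
  have h2 : (0:ℝ) ≤ (t - a) / (b - a) := by
    apply div_nonneg <;> [linarith [ht.1]; linarith]
  have h3 : (b - t) / (b - a) + (t - a) / (b - a) = 1 := by field_simp; ring
  have := hf.2 ha hb h1 h2 h3
  have ht' : ((b - t) / (b - a)) • a + ((t - a) / (b - a)) • b = t := by
    simp only [smul_eq_mul]; field_simp; ring
  rw [ht'] at this
  simp only [smul_eq_mul] at this
  calc f t ≤ (b - t) / (b - a) * f a + (t - a) / (b - a) * f b := this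
    _ = ((b - t) * f a + (t - a) * f b) / (b - a) := by ring

lemma convex_intervalIntegrable {I : Set ℝ} {f : ℝ → ℝ} (hf : ConvexOn ℝ I f)
    {a b : ℝ} (ha : a ∈ I) (hb : b ∈ I) (hab : a < b) :
    IntervalIntegrable f volume a b := by
  have hIcc : Set.Icc a b ⊆ I := hf.1.ordConnected.out ha hb
  have hIoo : Set.Ioo a b ⊆ interior I :=
    interior_maximal (fun t ht => hIcc (Ioo_subset_Icc_self ht)) isOpen_Ioo
  have hcont : ContinuousOn f (Set.Ioo a b) :=
    (hf.continuousOn_interior).mono hIoo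
  set M : ℝ := max (f a) (f b) with hM
  set m : ℝ := (a + b) / 2 with hm
  have hmI : m ∈ I := hIcc ⟨by simp [hm]; linarith, by simp [hm]; linarith⟩
  have hupper : ∀ t ∈ Set.Icc a b, f t ≤ M := by
    intro t ht
    have : t ∈ segment ℝ a b := by rwa [segment_eq_Icc hab.le]
    exact hf.le_on_segment ha hb this
  have hlower : ∀ t ∈ Set.Icc a b, 2 * f m - M ≤ f t := by
    intro t ht
    have ht' : a + b - t ∈ Set.Icc a b := ⟨by linarith [ht.2], by linarith [ht.1]⟩
    have h1 : f m ≤ (f t + f (a + b - t)) / 2 := by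
      have := hf.2 (hIcc ht) (hIcc ht') (by norm_num : (0:ℝ) ≤ 1/2)
        (by norm_num : (0:ℝ) ≤ 1/2) (by norm_num)
      have heq : (1/2 : ℝ) • t + (1/2 : ℝ) • (a + b - t) = m := by
        simp [hm]; ring
      rw [heq] at this
      simp only [smul_eq_mul] at this
      linarith
    have h2 : f (a + b - t) ≤ M := hupper _ ht'
    linarith
  have hbound : ∀ t ∈ Set.Ioo a b, ‖f t‖ ≤ |M| + |2 * f m - M| := by
    intro t ht
    have h1 := hupper t (Ioo_subset_Icc_self ht)
    have h2 := hlower t (Ioo_subset_Icc_self ht)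
    rw [Real.norm_eq_abs, abs_le]
    constructor
    · nlinarith [abs_nonneg M, neg_abs_le (2 * f m - M), abs_nonneg (2 * f m - M)]
    · nlinarith [le_abs_self M, abs_nonneg (2 * f m - M)]
  rw [intervalIntegrable_iff_integrableOn_Ioo_of_le hab.le]
  apply Integrable.mono' (g := fun _ => |M| + |2 * f m - M|)
  · exact integrableOn_const measure_Ioo_lt_top.ne
  · exact hcont.aestronglyMeasurable measurableSet_Ioo
  · exact (ae_restrict_iff' measurableSet_Ioo).2 (Filter.Eventually.of_forall hbound)

/-- Right Hermite–Hadamard inequality. -/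
lemma hh_right {I : Set ℝ} {f : ℝ → ℝ} (hf : ConvexOn ℝ I f)
    {a b : ℝ} (ha : a ∈ I) (hb : b ∈ I) (hab : a < b) :
    (∫ t in a..b, f t) ≤ (b - a) * (f a + f b) / 2 := by
  have hint := convex_intervalIntegrable hf ha hb hab
  have hba : (0:ℝ) < b - a := by linarith
  have hlin : IntervalIntegrable
      (fun t => ((b - t) * f a + (t - a) * f b) / (b - a)) volume a b := by
    apply Continuous.intervalIntegrable; fun_prop
  have hmono : (∫ t in a..b, f t)
      ≤ ∫ t in a..b, ((b - t) * f a + (t - a) * f b) / (b - a) := by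
    apply intervalIntegral.integral_mono_on hab.le hint hlin
    exact fun t ht => convex_chord_bound hf ha hb hab ht
  have hval : (∫ t in a..b, ((b - t) * f a + (t - a) * f b) / (b - a))
      = (b - a) * (f a + f b) / 2 := by
    have : ∀ t, ((b - t) * f a + (t - a) * f b) / (b - a)
        = (b * f a - a * f b) / (b - a) + t * ((f b - f a) / (b - a)) := by
      intro t; field_simp; ring
    simp only [this]
    rw [intervalIntegral.integral_add (by apply Continuous.intervalIntegrable; fun_prop)
      (by apply Continuous.intervalIntegrable; fun_prop),
      intervalIntegral.integral_const, intervalIntegral.integral_mul_const,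
      integral_id]
    simp only [smul_eq_mul]; field_simp
    ring
  linarith

theorem hermite_hadamard_sum (I : Set ℝ) (f : ℝ → ℝ) (hf : ConvexOn ℝ I f)
    (x y : ℝ) (hx : x ∈ I) (hy : y ∈ I) (hxy : x < y) :
    (2 / (y - x)) * ∫ t in x..y, f t ≤ f ((x + y) / 2) + (f x + f y) / 2 := by
  set m : ℝ := (x + y) / 2 with hm
  have hxm : x < m := by rw [hm]; linarith
  have hmy : m < y := by rw [hm]; linarith
  have hmI : m ∈ I := hf.1.ordConnected.out hx hy ⟨hxm.le, hmy.le⟩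
  have h1 := hh_right hf hx hmI hxm
  have h2 := hh_right hf hmI hy hmy
  have hadd : (∫ t in x..y, f t) = (∫ t in x..m, f t) + ∫ t in m..y, f t :=
    (intervalIntegral.integral_add_adjacent_intervals
      (convex_intervalIntegrable hf hx hmI hxm)
      (convex_intervalIntegrable hf hmI hy hmy)).symm
  have hyx : (0:ℝ) < y - x := by linarith
  rw [hadd, div_mul_eq_mul_div, div_le_iff₀ hyx] at *
  have hmx : m - x = (y - x) / 2 := by rw [hm]; ring
  have hym : y - m = (y - x) / 2 := by rw [hm]; ring
  rw [hmx] at h1; rw [hym] at h2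
  nlinarith [h1, h2]
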